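/- Let u, v : ℝ → ℝ² ∖ {0} be continuous l-periodic loops (l > 0), and let L : ℝ → GL₂(ℝ) be a continuous l-periodic family of invertible 2×2 matrices with det L(t) > 0 for all t. Identifying ℝ² with ℂ, the relative winding number is unchanged by applying L pointwise: wind(t ↦ (L(t)u(t))/(L(t)v(t))) = wind(t ↦ u(t)/v(t)), where the quotients are taken in ℂ ∖ {0}. -/

import Mathlib

/-- `IsWinding l γ w` says that the `l`-periodic loop `γ : ℝ → ℂ ∖ {0}` has winding
number `w` about the origin: there is a continuous angle lift `θ` with
`γ(s) = |γ(s)|·e^{iθ(s)}` and `θ(l) − θ(0) = 2πw`. -/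
def IsWinding (l : ℝ) (γ : ℝ → ℂ) (w : ℤ) : Prop :=
  ∃ θ : ℝ → ℝ, Continuous θ ∧
    (∀ s, γ s = (‖γ s‖ : ℂ) * Complex.exp ((θ s : ℂ) * Complex.I)) ∧
    θ l - θ 0 = 2 * Real.pi * w

/-- The action of a real 2×2 matrix on `ℂ ≅ ℝ²`. -/
noncomputable def mApply (m : Matrix (Fin 2) (Fin 2) ℝ) (z : ℂ) : ℂ :=
  Complex.mk (m 0 0 * z.re + m 0 1 * z.im) (m 1 0 * z.re + m 1 1 * z.im)

noncomputable def mA (m : Matrix (Fin 2) (Fin 2) ℝ) : ℂ :=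
  Complex.mk ((m 0 0 + m 1 1) / 2) ((m 1 0 - m 0 1) / 2)

noncomputable def mB (m : Matrix (Fin 2) (Fin 2) ℝ) : ℂ :=
  Complex.mk ((m 0 0 - m 1 1) / 2) ((m 1 0 + m 0 1) / 2)

lemma mApply_eq (m : Matrix (Fin 2) (Fin 2) ℝ) (z : ℂ) :
    mApply m z = mA m * z + mB m * (starRingEnd ℂ) z := by
  apply Complex.ext <;>
    simp [mApply, mA, mB, Complex.mul_re, Complex.mul_im] <;> ring

lemma normSq_mA_sub (m : Matrix (Fin 2) (Fin 2) ℝ) :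
    Complex.normSq (mA m) - Complex.normSq (mB m) = m.det := by
  simp [mA, mB, Complex.normSq_mk, Matrix.det_fin_two]
  ring

lemma abs_mB_lt (m : Matrix (Fin 2) (Fin 2) ℝ) (hm : 0 < m.det) :
    ‖mB m‖ < ‖mA m‖ := by
  have h := normSq_mA_sub m
  have h2 : (‖mB m‖) ^ 2 < (‖mA m‖) ^ 2 := by
    rw [Complex.sq_norm, Complex.sq_norm]; linarith
  exact lt_of_pow_lt_pow_left₀ 2 (norm_nonneg _) h2

lemma key_re (m : Matrix (Fin 2) (Fin 2) ℝ) (hm : 0 < m.det) (z : ℂ) (hz : z ≠ 0) :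
    0 < ((starRingEnd ℂ) z * mApply m z * (starRingEnd ℂ) (mA m)).re := by
  set a := mA m
  set b := mB m
  have hab : ‖b‖ < ‖a‖ := abs_mB_lt m hm
  have hb0 : 0 ≤ ‖b‖ := norm_nonneg b
  have ha' : 0 < ‖a‖ := lt_of_le_of_lt hb0 hab
  have hcalc : (starRingEnd ℂ) z * mApply m z * (starRingEnd ℂ) a
      = (Complex.normSq z : ℂ) * (Complex.normSq a : ℂ)
        + b * ((starRingEnd ℂ) z) ^ 2 * (starRingEnd ℂ) a := by
    rw [mApply_eq]
    rw [← Complex.mul_conj z, ← Complex.mul_conj a]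
    ring
  rw [hcalc]
  have hre : ((Complex.normSq z : ℂ) * (Complex.normSq a : ℂ)
      + b * ((starRingEnd ℂ) z) ^ 2 * (starRingEnd ℂ) a).re
      = Complex.normSq z * Complex.normSq a
        + (b * ((starRingEnd ℂ) z) ^ 2 * (starRingEnd ℂ) a).re := by
    simp [Complex.add_re]
  rw [hre]
  set B := b * ((starRingEnd ℂ) z) ^ 2 * (starRingEnd ℂ) a with hB
  have habs : ‖B‖ = ‖b‖ * (‖z‖) ^ 2 * ‖a‖ := by
    simp [hB, norm_mul, norm_pow, Complex.norm_conj]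
  have hb1 : -(‖b‖ * (‖z‖) ^ 2 * ‖a‖) ≤ B.re := by
    have h1 := Complex.abs_re_le_norm B
    rw [habs] at h1
    linarith [neg_abs_le B.re]
  have hz' : 0 < ‖z‖ := norm_pos_iff.mpr hz
  have hnz : Complex.normSq z = ‖z‖ ^ 2 := (Complex.sq_norm z).symm
  have hna : Complex.normSq a = ‖a‖ ^ 2 := (Complex.sq_norm a).symm
  rw [hnz, hna]
  nlinarith [hb1, mul_pos (mul_pos (mul_pos hz' hz') ha') (sub_pos.mpr hab)]

lemma mApply_ne_zero (m : Matrix (Fin 2) (Fin 2) ℝ) (hm : 0 < m.det) (z : ℂ) (hz : z ≠ 0) :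
    mApply m z ≠ 0 := by
  intro h
  have := key_re m hm z hz
  rw [h] at this
  simp at this

lemma halfplane_mul_conj_mem_slitPlane (a x y : ℂ)
    (hx : 0 < (x * (starRingEnd ℂ) a).re) (hy : 0 < (y * (starRingEnd ℂ) a).re) :
    x * (starRingEnd ℂ) y ∈ Complex.slitPlane := by
  rw [Complex.mem_slitPlane_iff]
  by_contra h
  push_neg at h
  obtain ⟨hre, him⟩ := h
  have hy0 : y ≠ 0 := by rintro rfl; simp at hy
  set r : ℝ := (x * (starRingEnd ℂ) y).re with hr
  have hxy : x * (starRingEnd ℂ) y = (r : ℂ) := by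
    apply Complex.ext
    · simp [hr]
    · simp [him]
  have h0 : (starRingEnd ℂ) y * y = (Complex.normSq y : ℂ) := by
    rw [mul_comm, Complex.mul_conj]
  have hkey : x * (Complex.normSq y : ℂ) = (r : ℂ) * y := by
    calc x * (Complex.normSq y : ℂ) = x * ((starRingEnd ℂ) y * y) := by rw [h0]
      _ = (x * (starRingEnd ℂ) y) * y := by ring
      _ = (r : ℂ) * y := by rw [hxy]
  have hmul : Complex.normSq y * (x * (starRingEnd ℂ) a).re
      = r * (y * (starRingEnd ℂ) a).re := by
    have h1 : x * (Complex.normSq y : ℂ) * (starRingEnd ℂ) a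
        = (r : ℂ) * (y * (starRingEnd ℂ) a) := by rw [hkey]; ring
    have h2 : x * (Complex.normSq y : ℂ) * (starRingEnd ℂ) a
        = (Complex.normSq y : ℂ) * (x * (starRingEnd ℂ) a) := by ring
    have h3 := congrArg Complex.re (h2.symm.trans h1)
    simpa only [Complex.re_ofReal_mul] using h3
  have hnsy : 0 < Complex.normSq y := Complex.normSq_pos.mpr hy0
  nlinarith [mul_nonpos_of_nonpos_of_nonneg hre (le_of_lt hy)]

lemma slitPlane_div_pos (c : ℝ) (hc : 0 < c) (z : ℂ) (hz : z ∈ Complex.slitPlane) :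
    z / (c : ℂ) ∈ Complex.slitPlane := by
  rw [Complex.mem_slitPlane_iff] at hz ⊢
  rcases hz with h | h
  · left
    rw [Complex.div_ofReal_re]
    positivity
  · right
    rw [Complex.div_ofReal_im]
    exact div_ne_zero h (ne_of_gt hc)

/-- Applying a continuous `l`-periodic family of orientation-preserving invertible
matrices pointwise does not change the relative winding number of two loops. -/
theorem relative_winding_invariant_under_orientation_preserving_maps
    (l : ℝ) (hl : 0 < l)
    (u v : ℝ → ℂ)
    (hu : Continuous u) (hv : Continuous v)
    (hu0 : ∀ t, u t ≠ 0) (hv0 : ∀ t, v t ≠ 0)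
    (hup : Function.Periodic u l) (hvp : Function.Periodic v l)
    (L : ℝ → Matrix (Fin 2) (Fin 2) ℝ)
    (hL : Continuous L) (hLp : Function.Periodic L l)
    (hLdet : ∀ t, 0 < (L t).det)
    (w : ℤ)
    (hw : IsWinding l (fun t => u t / v t) w) :
    IsWinding l (fun t => mApply (L t) (u t) / mApply (L t) (v t)) w := by
  obtain ⟨θ, hθc, hθeq, hθw⟩ := hw
  set Q : ℝ → ℂ := fun t => (mApply (L t) (u t) * v t) / (u t * mApply (L t) (v t)) with hQ
  have hmu0 : ∀ t, mApply (L t) (u t) ≠ 0 := fun t => mApply_ne_zero _ (hLdet t) _ (hu0 t)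
  have hmv0 : ∀ t, mApply (L t) (v t) ≠ 0 := fun t => mApply_ne_zero _ (hLdet t) _ (hv0 t)
  have hQ0 : ∀ t, Q t ≠ 0 := by
    intro t
    simp only [hQ]
    exact div_ne_zero (mul_ne_zero (hmu0 t) (hv0 t)) (mul_ne_zero (hu0 t) (hmv0 t))
  -- Q lies in the slit plane
  have hQslit : ∀ t, Q t ∈ Complex.slitPlane := by
    intro t
    have hx := key_re (L t) (hLdet t) (u t) (hu0 t)
    have hy := key_re (L t) (hLdet t) (v t) (hv0 t)
    set x := (starRingEnd ℂ) (u t) * mApply (L t) (u t) with hxdef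
    set y := (starRingEnd ℂ) (v t) * mApply (L t) (v t) with hydef
    have hslit : x * (starRingEnd ℂ) y ∈ Complex.slitPlane :=
      halfplane_mul_conj_mem_slitPlane (mA (L t)) x y hx hy
    set c : ℝ := Complex.normSq (u t) * Complex.normSq (mApply (L t) (v t)) with hc
    have hcpos : 0 < c := mul_pos (Complex.normSq_pos.mpr (hu0 t))
      (Complex.normSq_pos.mpr (hmv0 t))
    have hQt : Q t = (x * (starRingEnd ℂ) y) / (c : ℂ) := by
      have hcne : (c : ℂ) ≠ 0 := by exact_mod_cast (ne_of_gt hcpos)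
      rw [eq_div_iff hcne]
      have hcc : (c : ℂ) = (u t * (starRingEnd ℂ) (u t))
          * (mApply (L t) (v t) * (starRingEnd ℂ) (mApply (L t) (v t))) := by
        rw [Complex.mul_conj, Complex.mul_conj]
        push_cast [hc]
        ring
      rw [hQ]
      simp only
      rw [hcc, div_mul_eq_mul_div, div_eq_iff (mul_ne_zero (hu0 t) (hmv0 t)), hxdef, hydef]
      simp only [map_mul, Complex.conj_conj]
      ring
    rw [hQt]
    exact slitPlane_div_pos c hcpos _ hslit
  -- continuity of Q
  have hmap : ∀ (f : ℝ → ℂ), Continuous f → Continuous fun t => mApply (L t) (f t) := by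
    intro f hf
    have heq : (fun t => mApply (L t) (f t))
        = fun t => ((L t 0 0 * (f t).re + L t 0 1 * (f t).im : ℝ) : ℂ)
          + ((L t 1 0 * (f t).re + L t 1 1 * (f t).im : ℝ) : ℂ) * Complex.I := by
      funext t
      rw [mApply, Complex.mk_eq_add_mul_I]
    rw [heq]
    have hentry : ∀ i j, Continuous fun t => L t i j := fun i j =>
      ((continuous_apply j).comp ((continuous_apply i).comp hL))
    have hfre : Continuous fun t => (f t).re := Complex.continuous_re.comp hf
    have hfim : Continuous fun t => (f t).im := Complex.continuous_im.comp hf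
    apply Continuous.add
    · exact Complex.continuous_ofReal.comp
        (((hentry 0 0).mul hfre).add ((hentry 0 1).mul hfim))
    · exact (Complex.continuous_ofReal.comp
        (((hentry 1 0).mul hfre).add ((hentry 1 1).mul hfim))).mul continuous_const
  have hQcont : Continuous Q := by
    apply Continuous.div
    · exact (hmap u hu).mul hv
    · exact hu.mul (hmap v hv)
    · exact fun t => mul_ne_zero (hu0 t) (hmv0 t)
  -- the corrected angle
  refine ⟨fun t => θ t + Complex.arg (Q t), ?_, ?_, ?_⟩
  · apply hθc.add
    rw [continuous_iff_continuousAt]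
    intro t
    exact (Complex.continuousAt_arg (hQslit t)).comp hQcont.continuousAt
  · intro t
    have hfg : mApply (L t) (u t) / mApply (L t) (v t) = Q t * (u t / v t) := by
      rw [hQ]
      simp only
      rw [div_mul_div_comm, div_eq_div_iff (hmv0 t)
        (mul_ne_zero (mul_ne_zero (hu0 t) (hmv0 t)) (hv0 t))]
      ring
    have hg := hθeq t
    simp only at hg
    have hQdecomp : Q t = (‖Q t‖ : ℂ)
        * Complex.exp ((Complex.arg (Q t) : ℂ) * Complex.I) :=
      (Complex.norm_mul_exp_arg_mul_I (Q t)).symm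
    have hexp : Complex.exp (((θ t + (Q t).arg : ℝ) : ℂ) * Complex.I)
        = Complex.exp (((Q t).arg : ℂ) * Complex.I)
          * Complex.exp (((θ t : ℝ) : ℂ) * Complex.I) := by
      rw [← Complex.exp_add]
      congr 1
      push_cast
      ring
    show mApply (L t) (u t) / mApply (L t) (v t)
        = (‖mApply (L t) (u t) / mApply (L t) (v t)‖ : ℂ)
          * Complex.exp (((θ t + (Q t).arg : ℝ) : ℂ) * Complex.I)
    rw [hexp, hfg, norm_mul]
    push_cast
    nth_rewrite 1 [hQdecomp]
    nth_rewrite 1 [hg]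
    ring
  · have hQl : Q l = Q 0 := by
      have h1 : L l = L 0 := by simpa using hLp 0
      have h2 : u l = u 0 := by simpa using hup 0
      have h3 : v l = v 0 := by simpa using hvp 0
      simp only [hQ, h1, h2, h3]
    show θ l + (Q l).arg - (θ 0 + (Q 0).arg) = 2 * Real.pi * w
    rw [hQl]
    linarith [hθw]
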